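/- arXiv:1306.5016 — 2 statements merged into one kernel-verified Lean document; each statement's English description precedes it below -/
import Mathlib

section
/- Let d ≥ 1, α ∈ (0,2), and let ν_S be a measure on (0,∞) such that for some C ≥ 1 and all ε ∈ (0,1], ∫_{(0,ε]} u ν_S(du) ≤ C ε^{1-α/2} and ν_S([ε,∞)) ≤ C ε^{-α/2}. Define the measure ν_L on ℝ^d by ν_L(E) = ∫₀^∞ ∫_E (2πu)^{-d/2} e^{-|z|²/(2u)} dz ν_S(du). Then there exists C₀ ≥ 1 such that for all δ ∈ (0,1), ∫_{|z|≥δ} ν_L(dz) ≤ C₀ δ^{-α}. -/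
open MeasureTheory Set ENNReal Real

lemma gauss_integrable (d : ℕ) {b : ℝ} (hb : 0 < b) :
    Integrable (fun z : EuclideanSpace ℝ (Fin d) ↦ Real.exp (-b * ‖z‖^2)) := by
  have h := (GaussianFourier.integrable_cexp_neg_mul_sq_norm_add
    (V := EuclideanSpace ℝ (Fin d)) (b := (b:ℂ)) (by simpa using hb) 0 0).norm
  refine h.congr (Filter.Eventually.of_forall fun z => ?_)
  simp only []
  rw [Complex.norm_exp]
  simp [← Complex.ofReal_pow]

lemma gauss_lintegral (d : ℕ) {b : ℝ} (hb : 0 < b) :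
    ∫⁻ z : EuclideanSpace ℝ (Fin d), ENNReal.ofReal (Real.exp (-b * ‖z‖^2))
      = ENNReal.ofReal ((Real.pi / b) ^ ((d:ℝ)/2)) := by
  rw [← ofReal_integral_eq_lintegral_ofReal (gauss_integrable d hb)
    (Filter.Eventually.of_forall fun z => (Real.exp_pos _).le),
    GaussianFourier.integral_rexp_neg_mul_sq_norm hb]
  norm_num [finrank_euclideanSpace_fin]

lemma inner_le_one (d : ℕ) {u : ℝ} (hu : 0 < u) (E : Set (EuclideanSpace ℝ (Fin d))) :
    ∫⁻ z in E, ENNReal.ofReal ((2 * Real.pi * u) ^ (-(d:ℝ) / 2)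
      * Real.exp (-‖z‖ ^ 2 / (2 * u))) ≤ 1 := by
  have hπ : (0:ℝ) < Real.pi := Real.pi_pos
  have h2u : (0:ℝ) < 2 * Real.pi * u := by positivity
  have hb : (0:ℝ) < (2*u)⁻¹ := by positivity
  calc ∫⁻ z in E, ENNReal.ofReal ((2 * Real.pi * u) ^ (-(d:ℝ) / 2)
        * Real.exp (-‖z‖ ^ 2 / (2 * u)))
      ≤ ∫⁻ z, ENNReal.ofReal ((2 * Real.pi * u) ^ (-(d:ℝ) / 2)
        * Real.exp (-‖z‖ ^ 2 / (2 * u))) := setLIntegral_le_lintegral _ _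
    _ = ENNReal.ofReal ((2 * Real.pi * u) ^ (-(d:ℝ) / 2)) *
        ∫⁻ z : EuclideanSpace ℝ (Fin d), ENNReal.ofReal (Real.exp (-(2*u)⁻¹ * ‖z‖^2)) := by
        rw [← lintegral_const_mul' _ _ ofReal_ne_top]
        congr 1 with z
        rw [← ENNReal.ofReal_mul (by positivity)]
        congr 2
        ring
    _ = ENNReal.ofReal ((2 * Real.pi * u) ^ (-(d:ℝ) / 2)) *
        ENNReal.ofReal ((2 * Real.pi * u) ^ ((d:ℝ) / 2)) := by
        rw [gauss_lintegral d hb,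
          show Real.pi/(2*u)⁻¹ = 2*Real.pi*u from by field_simp]
    _ = 1 := by
        rw [← ENNReal.ofReal_mul (by positivity), ← Real.rpow_add h2u,
          show (-(d:ℝ)/2 + (d:ℝ)/2) = 0 from by ring, Real.rpow_zero, ofReal_one]

lemma exp_neg_le_inv {t : ℝ} (ht : 0 < t) : Real.exp (-t) ≤ t⁻¹ := by
  rw [Real.exp_neg]
  exact inv_anti₀ ht (by linarith [Real.add_one_le_exp t])

lemma inner_le_tail (d : ℕ) {u δ : ℝ} (hu : 0 < u) (hδ : 0 < δ) :
    ∫⁻ z in {z : EuclideanSpace ℝ (Fin d) | δ ≤ ‖z‖},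
      ENNReal.ofReal ((2 * Real.pi * u) ^ (-(d:ℝ) / 2)
        * Real.exp (-‖z‖ ^ 2 / (2 * u)))
      ≤ ENNReal.ofReal (2 ^ ((d:ℝ)/2) * 4 * u / δ^2) := by
  have hπ : (0:ℝ) < Real.pi := Real.pi_pos
  have h2u : (0:ℝ) < 2 * Real.pi * u := by positivity
  have hb : (0:ℝ) < (4*u)⁻¹ := by positivity
  have hmeas : MeasurableSet {z : EuclideanSpace ℝ (Fin d) | δ ≤ ‖z‖} :=
    measurableSet_le measurable_const measurable_norm
  have hpt : ∀ z ∈ {z : EuclideanSpace ℝ (Fin d) | δ ≤ ‖z‖},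
      ENNReal.ofReal ((2 * Real.pi * u) ^ (-(d:ℝ) / 2) * Real.exp (-‖z‖ ^ 2 / (2 * u)))
      ≤ ENNReal.ofReal (((2 * Real.pi * u) ^ (-(d:ℝ) / 2) * (4*u/δ^2))
          * Real.exp (-(4*u)⁻¹ * ‖z‖^2)) := by
    intro z hz
    apply ENNReal.ofReal_le_ofReal
    have hz' : δ ≤ ‖z‖ := hz
    have hsq : δ^2 ≤ ‖z‖^2 := by nlinarith [norm_nonneg z]
    have hsplit : -‖z‖ ^ 2 / (2 * u) = -‖z‖^2/(4*u) + -‖z‖^2/(4*u) := by ring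
    rw [hsplit, Real.exp_add]
    have h1 : Real.exp (-‖z‖^2/(4*u)) ≤ 4*u/δ^2 := by
      calc Real.exp (-‖z‖^2/(4*u)) ≤ Real.exp (-(δ^2/(4*u))) := by
            apply Real.exp_le_exp.2
            rw [neg_div]
            apply neg_le_neg
            gcongr
        _ ≤ (δ^2/(4*u))⁻¹ := exp_neg_le_inv (by positivity)
        _ = 4*u/δ^2 := by field_simp
    have h2 : Real.exp (-‖z‖^2/(4*u)) = Real.exp (-(4*u)⁻¹ * ‖z‖^2) := by
      congr 1; ring
    calc (2 * Real.pi * u) ^ (-(d:ℝ) / 2) * (Real.exp (-‖z‖^2/(4*u)) * Real.exp (-‖z‖^2/(4*u)))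
        ≤ (2 * Real.pi * u) ^ (-(d:ℝ) / 2) * ((4*u/δ^2) * Real.exp (-‖z‖^2/(4*u))) := by
          apply mul_le_mul_of_nonneg_left _ (Real.rpow_nonneg h2u.le _)
          exact mul_le_mul_of_nonneg_right h1 (Real.exp_pos _).le
      _ = ((2 * Real.pi * u) ^ (-(d:ℝ) / 2) * (4*u/δ^2)) * Real.exp (-(4*u)⁻¹ * ‖z‖^2) := by
          rw [h2]; ring
  calc ∫⁻ z in {z : EuclideanSpace ℝ (Fin d) | δ ≤ ‖z‖},
        ENNReal.ofReal ((2 * Real.pi * u) ^ (-(d:ℝ) / 2) * Real.exp (-‖z‖ ^ 2 / (2 * u)))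
      ≤ ∫⁻ z in {z : EuclideanSpace ℝ (Fin d) | δ ≤ ‖z‖},
        ENNReal.ofReal (((2 * Real.pi * u) ^ (-(d:ℝ) / 2) * (4*u/δ^2))
          * Real.exp (-(4*u)⁻¹ * ‖z‖^2)) := setLIntegral_mono' hmeas hpt
    _ ≤ ∫⁻ z, ENNReal.ofReal (((2 * Real.pi * u) ^ (-(d:ℝ) / 2) * (4*u/δ^2))
          * Real.exp (-(4*u)⁻¹ * ‖z‖^2)) := setLIntegral_le_lintegral _ _
    _ = ENNReal.ofReal ((2 * Real.pi * u) ^ (-(d:ℝ) / 2) * (4*u/δ^2)) *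
        ∫⁻ z : EuclideanSpace ℝ (Fin d), ENNReal.ofReal (Real.exp (-(4*u)⁻¹ * ‖z‖^2)) := by
        rw [← lintegral_const_mul' _ _ ofReal_ne_top]
        congr 1 with z
        rw [← ENNReal.ofReal_mul (by positivity)]
    _ = ENNReal.ofReal (2 ^ ((d:ℝ)/2) * 4 * u / δ^2) := by
        rw [gauss_lintegral d hb, ← ENNReal.ofReal_mul (by positivity)]
        congr 1
        have hπb : Real.pi / (4*u)⁻¹ = 2 * (2 * Real.pi * u) := by field_simp; ring
        rw [hπb, Real.mul_rpow (by norm_num) h2u.le]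
        have key : (2*Real.pi*u) ^ (-(d:ℝ)/2) * (2*Real.pi*u) ^ ((d:ℝ)/2) = 1 := by
          rw [← Real.rpow_add h2u, show (-(d:ℝ)/2 + (d:ℝ)/2) = 0 from by ring, Real.rpow_zero]
        linear_combination (2 ^ ((d:ℝ)/2) * (4*u/δ^2)) * key

theorem subordinated_levy_measure_large_jump_bound
    (d : ℕ) (hd : 1 ≤ d) (α : ℝ) (hα : α ∈ Set.Ioo (0:ℝ) 2)
    (νS : Measure ℝ) (C : ℝ) (hC : 1 ≤ C)
    (hmom : ∀ ε ∈ Set.Ioc (0:ℝ) 1,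
      ∫⁻ u in Set.Ioc (0:ℝ) ε, ENNReal.ofReal u ∂νS
        ≤ ENNReal.ofReal (C * ε ^ (1 - α / 2)))
    (htail : ∀ ε ∈ Set.Ioc (0:ℝ) 1,
      νS (Set.Ici ε) ≤ ENNReal.ofReal (C * ε ^ (-(α / 2))))
    (νL : Set (EuclideanSpace ℝ (Fin d)) → ℝ≥0∞)
    (hνL : ∀ E : Set (EuclideanSpace ℝ (Fin d)),
      νL E = ∫⁻ u in Set.Ioi (0:ℝ),
        (∫⁻ z in E,
          ENNReal.ofReal ((2 * Real.pi * u) ^ (-(d:ℝ) / 2)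
            * Real.exp (-‖z‖ ^ 2 / (2 * u)))) ∂νS) :
    ∃ C₀ : ℝ, 1 ≤ C₀ ∧ ∀ δ ∈ Set.Ioo (0:ℝ) 1,
      νL {z | δ ≤ ‖z‖} ≤ ENNReal.ofReal (C₀ * δ ^ (-α)) := by
  have h2e : (1:ℝ) ≤ 2 ^ ((d:ℝ)/2) := Real.one_le_rpow one_le_two (by positivity)
  refine ⟨(4 * 2 ^ ((d:ℝ)/2) + 1) * C, by nlinarith, ?_⟩
  rintro δ ⟨hδ0, hδ1⟩
  have hδ2 : (δ^2 : ℝ) ∈ Set.Ioc (0:ℝ) 1 := ⟨by positivity, by nlinarith⟩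
  rw [hνL, show Set.Ioi (0:ℝ) = Set.Ioc 0 (δ^2) ∪ Set.Ioi (δ^2) from
    (Set.Ioc_union_Ioi_eq_Ioi (by positivity)).symm,
    lintegral_union measurableSet_Ioi (Set.Ioc_disjoint_Ioi le_rfl)]
  set G : ℝ → ℝ≥0∞ := fun u => ∫⁻ z in {z : EuclideanSpace ℝ (Fin d) | δ ≤ ‖z‖},
    ENNReal.ofReal ((2 * Real.pi * u) ^ (-(d:ℝ) / 2) * Real.exp (-‖z‖ ^ 2 / (2 * u))) with hG
  have h1 : ∫⁻ u in Set.Ioc (0:ℝ) (δ^2), G u ∂νS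
      ≤ ENNReal.ofReal (2 ^ ((d:ℝ)/2) * 4 / δ^2) * ENNReal.ofReal (C * (δ^2) ^ (1 - α/2)) := by
    calc ∫⁻ u in Set.Ioc (0:ℝ) (δ^2), G u ∂νS
        ≤ ∫⁻ u in Set.Ioc (0:ℝ) (δ^2),
            ENNReal.ofReal (2 ^ ((d:ℝ)/2) * 4 / δ^2) * ENNReal.ofReal u ∂νS := by
          refine setLIntegral_mono' measurableSet_Ioc fun u hu => ?_
          calc G u ≤ ENNReal.ofReal (2 ^ ((d:ℝ)/2) * 4 * u / δ^2) := inner_le_tail d hu.1 hδ0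
            _ = ENNReal.ofReal (2 ^ ((d:ℝ)/2) * 4 / δ^2) * ENNReal.ofReal u := by
                rw [← ENNReal.ofReal_mul (by positivity)]
                congr 1
                ring
      _ = ENNReal.ofReal (2 ^ ((d:ℝ)/2) * 4 / δ^2) * ∫⁻ u in Set.Ioc (0:ℝ) (δ^2),
            ENNReal.ofReal u ∂νS := lintegral_const_mul' _ _ ofReal_ne_top
      _ ≤ _ := mul_le_mul_right (hmom _ hδ2) _
  have h2 : ∫⁻ u in Set.Ioi (δ^2), G u ∂νS ≤ ENNReal.ofReal (C * (δ^2) ^ (-(α/2))) := by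
    calc ∫⁻ u in Set.Ioi (δ^2), G u ∂νS
        ≤ ∫⁻ _ in Set.Ioi (δ^2), 1 ∂νS := by
          refine setLIntegral_mono' measurableSet_Ioi fun u hu => ?_
          exact inner_le_one d (lt_trans (by positivity) hu) _
      _ = νS (Set.Ioi (δ^2)) := setLIntegral_one _
      _ ≤ νS (Set.Ici (δ^2)) := measure_mono Set.Ioi_subset_Ici_self
      _ ≤ _ := htail _ hδ2
  refine le_trans (add_le_add h1 h2) ?_
  rw [← ENNReal.ofReal_mul (by positivity), ← ENNReal.ofReal_add (by positivity) (by positivity)]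
  apply ENNReal.ofReal_le_ofReal
  have hpow1 : ((δ^2 : ℝ)) ^ (1 - α/2) = δ ^ ((2:ℝ) - α) := by
    rw [← Real.rpow_natCast δ 2, ← Real.rpow_mul hδ0.le]
    norm_num
    congr 1
    ring
  have hpow2 : ((δ^2 : ℝ)) ^ (-(α/2)) = δ ^ (-α) := by
    rw [← Real.rpow_natCast δ 2, ← Real.rpow_mul hδ0.le]
    norm_num
    congr 1
    ring
  rw [hpow1, hpow2]
  have hsplit : δ ^ ((2:ℝ) - α) = δ^2 * δ ^ (-α) := by
    rw [show ((2:ℝ) - α) = 2 + (-α) from by ring, Real.rpow_add hδ0, Real.rpow_two]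
  rw [hsplit]
  have hδ2ne : (δ:ℝ)^2 ≠ 0 := by positivity
  apply le_of_eq
  field_simp
end

section
/- Under the same assumptions as above on ν_S and with ν_L(E) = ∫₀^∞ ∫_E (2πu)^{-d/2} e^{-|z|²/(2u)} dz ν_S(du), there exists C₁ ≥ 1 such that for all δ ∈ (0,1), ∫_{|z|≤δ} |z|² ν_L(dz) ≤ C₁ δ^{2-α}. -/
open MeasureTheory Set ENNReal

lemma gauss_moment_integrable (d : ℕ) :
    Integrable (fun x : EuclideanSpace ℝ (Fin d) => ‖x‖ ^ 2 * Real.exp (-‖x‖ ^ 2)) := by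
  have hb : (0:ℝ) < ((1/2 : ℂ)).re := by norm_num
  have h1 := (GaussianFourier.integrable_cexp_neg_mul_sq_norm_add
    (V := EuclideanSpace ℝ (Fin d)) hb 0 0).norm
  refine h1.const_mul 2 |>.mono' (by apply Continuous.aestronglyMeasurable; fun_prop)
    (Filter.Eventually.of_forall fun x => ?_)
  simp only [Complex.norm_exp, inner_zero_left, Complex.ofReal_zero,
    mul_zero, add_zero, Complex.mul_re, Complex.neg_re, Complex.ofReal_re, Complex.neg_im,
    Complex.ofReal_im, sub_zero, ← Complex.ofReal_pow]
  norm_num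
  set t : ℝ := ‖x‖ ^ 2 with ht
  have ht0 : 0 ≤ t := sq_nonneg _
  have h2 : Real.exp (-t) = Real.exp (-(1/2 * t)) * Real.exp (-(1/2 * t)) := by
    rw [← Real.exp_add]; ring_nf
  have h3 := Real.add_one_le_exp (t/2)
  have h4 : Real.exp (t/2) * Real.exp (-(1/2 * t)) = 1 := by
    rw [← Real.exp_add, show t/2 + -(1/2*t) = 0 by ring, Real.exp_zero]
  have h5 : (0:ℝ) < Real.exp (-(1/2 * t)) := Real.exp_pos _
  rw [h2]
  nlinarith [sq_nonneg (Real.exp (-(1/2 * t))), mul_nonneg ht0 h5.le,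
    mul_nonneg (mul_nonneg ht0 h5.le) h5.le]

lemma inner_le_small (d : ℕ) (u : ℝ) (hu : 0 < u) (δ : ℝ) :
    (∫⁻ z in {z : EuclideanSpace ℝ (Fin d) | ‖z‖ ≤ δ},
      ENNReal.ofReal (‖z‖ ^ 2 * ((2 * Real.pi * u) ^ (-(d:ℝ) / 2)
        * Real.exp (-‖z‖ ^ 2 / (2 * u)))))
    ≤ (ENNReal.ofReal (2 * Real.pi ^ (-(d:ℝ)/2)) *
        ∫⁻ x : EuclideanSpace ℝ (Fin d), ENNReal.ofReal (‖x‖ ^ 2 * Real.exp (-‖x‖ ^ 2)))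
      * ENNReal.ofReal u := by
  set E := EuclideanSpace ℝ (Fin d)
  set c : ℝ := (2 * Real.pi * u) ^ (-(d:ℝ) / 2) with hc_def
  set g : E → ℝ≥0∞ := fun z => ENNReal.ofReal (‖z‖ ^ 2 * (c * Real.exp (-‖z‖ ^ 2 / (2 * u))))
    with hg_def
  have hgc : Continuous fun z : E => ‖z‖ ^ 2 * (c * Real.exp (-‖z‖ ^ 2 / (2 * u))) := by
    fun_prop
  have hgm : Measurable g := hgc.measurable.ennreal_ofReal
  have h2u : (0:ℝ) < 2 * u := by linarith
  set r : ℝ := Real.sqrt (2 * u) with hr_def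
  have hr : 0 < r := Real.sqrt_pos.2 h2u
  have hrd : r ^ d = (2 * u) ^ ((d:ℝ) / 2) := by
    rw [← Real.rpow_natCast r d, hr_def, Real.sqrt_eq_rpow, ← Real.rpow_mul h2u.le]
    congr 1; ring
  have hrd_pos : (0:ℝ) < r ^ d := pow_pos hr d
  have hmap : Measure.map (r • ·) (volume : Measure E)
      = ENNReal.ofReal |(r ^ Module.finrank ℝ E)⁻¹| • volume :=
    Measure.map_addHaar_smul _ hr.ne'
  have hfr : Module.finrank ℝ E = d := @finrank_euclideanSpace_fin ℝ _ d
  have hmapint : ∫⁻ x, g (r • x) = ENNReal.ofReal ((r ^ d)⁻¹) * ∫⁻ z, g z := by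
    rw [← lintegral_map hgm (measurable_const_smul r), hmap, lintegral_smul_measure]
    congr 2
    rw [hfr, abs_of_pos (inv_pos.2 hrd_pos)]
  have hint : ∫⁻ z, g z = ENNReal.ofReal (r ^ d) * ∫⁻ x, g (r • x) := by
    rw [hmapint, ← mul_assoc, ← ENNReal.ofReal_mul hrd_pos.le,
      mul_inv_cancel₀ hrd_pos.ne', ENNReal.ofReal_one, one_mul]
  have hgr : ∀ x : E, g (r • x)
      = ENNReal.ofReal (2 * u * c) * ENNReal.ofReal (‖x‖ ^ 2 * Real.exp (-‖x‖ ^ 2)) := by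
    intro x
    have hnorm : ‖r • x‖ = r * ‖x‖ := by
      rw [norm_smul, Real.norm_eq_abs, abs_of_pos hr]
    have hr2 : r ^ 2 = 2 * u := Real.sq_sqrt h2u.le
    have harg : -(r * ‖x‖) ^ 2 / (2 * u) = -‖x‖ ^ 2 := by
      rw [mul_pow, hr2]; field_simp
    rw [hg_def]
    simp only [hnorm, harg]
    rw [← ENNReal.ofReal_mul (by positivity)]
    congr 1
    rw [mul_pow, hr2]; ring
  have hconst : ENNReal.ofReal (r ^ d) * ENNReal.ofReal (2 * u * c)
      = ENNReal.ofReal (2 * Real.pi ^ (-(d:ℝ)/2)) * ENNReal.ofReal u := by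
    rw [← ENNReal.ofReal_mul hrd_pos.le, ← ENNReal.ofReal_mul (by positivity)]
    congr 1
    have hcval : c = (2 * u) ^ (-(d:ℝ)/2) * Real.pi ^ (-(d:ℝ)/2) := by
      rw [hc_def, show 2 * Real.pi * u = (2 * u) * Real.pi by ring,
        Real.mul_rpow h2u.le Real.pi_pos.le]
    have hone : (2 * u) ^ ((d:ℝ)/2) * (2 * u) ^ (-(d:ℝ)/2) = 1 := by
      rw [← Real.rpow_add h2u, show (d:ℝ)/2 + -(d:ℝ)/2 = 0 by ring, Real.rpow_zero]
    have : r ^ d * (2 * u * c)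
        = 2 * u * (((2 * u) ^ ((d:ℝ)/2) * (2 * u) ^ (-(d:ℝ)/2)) * Real.pi ^ (-(d:ℝ)/2)) := by
      rw [hrd, hcval]; ring
    rw [this, hone]; ring
  calc (∫⁻ z in {z : E | ‖z‖ ≤ δ}, g z) ≤ ∫⁻ z, g z := setLIntegral_le_lintegral _ _
    _ = ENNReal.ofReal (r ^ d) * ∫⁻ x, g (r • x) := hint
    _ = ENNReal.ofReal (r ^ d) * (ENNReal.ofReal (2 * u * c)
          * ∫⁻ x : E, ENNReal.ofReal (‖x‖ ^ 2 * Real.exp (-‖x‖ ^ 2))) := by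
        congr 1
        simp_rw [hgr]
        exact lintegral_const_mul' _ _ ENNReal.ofReal_ne_top
    _ = (ENNReal.ofReal (2 * Real.pi ^ (-(d:ℝ)/2))
          * ∫⁻ x : E, ENNReal.ofReal (‖x‖ ^ 2 * Real.exp (-‖x‖ ^ 2))) * ENNReal.ofReal u := by
        rw [← mul_assoc, hconst]; ring

lemma inner_le_large (d : ℕ) (δ : ℝ) (hδ0 : 0 < δ) (u : ℝ) (hu : δ ^ 2 ≤ u) :
    (∫⁻ z in {z : EuclideanSpace ℝ (Fin d) | ‖z‖ ≤ δ},
      ENNReal.ofReal (‖z‖ ^ 2 * ((2 * Real.pi * u) ^ (-(d:ℝ) / 2)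
        * Real.exp (-‖z‖ ^ 2 / (2 * u)))))
    ≤ ENNReal.ofReal (δ ^ 2 * (2 * Real.pi) ^ (-(d:ℝ)/2))
        * volume (Metric.ball (0 : EuclideanSpace ℝ (Fin d)) 1) := by
  set E := EuclideanSpace ℝ (Fin d)
  have hu0 : (0:ℝ) < u := lt_of_lt_of_le (by positivity) hu
  have hS : {z : E | ‖z‖ ≤ δ} = Metric.closedBall (0 : E) δ := by
    ext z; simp [Metric.mem_closedBall, dist_zero_right]
  have hptwise : ∀ z ∈ {z : E | ‖z‖ ≤ δ},
      ENNReal.ofReal (‖z‖ ^ 2 * ((2 * Real.pi * u) ^ (-(d:ℝ) / 2)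
        * Real.exp (-‖z‖ ^ 2 / (2 * u))))
      ≤ ENNReal.ofReal (δ ^ 2 * (2 * Real.pi * δ ^ 2) ^ (-(d:ℝ)/2)) := by
    intro z hz
    simp only [mem_setOf_eq] at hz
    apply ENNReal.ofReal_le_ofReal
    have h1 : ‖z‖ ^ 2 ≤ δ ^ 2 := by nlinarith [norm_nonneg z]
    have h2 : Real.exp (-‖z‖ ^ 2 / (2 * u)) ≤ 1 := by
      rw [show (1:ℝ) = Real.exp 0 from Real.exp_zero.symm]
      apply Real.exp_le_exp.2
      rw [show -‖z‖ ^ 2 / (2 * u) = -(‖z‖ ^ 2 / (2 * u)) by ring]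
      exact neg_nonpos.2 (by positivity)
    have h3 : (2 * Real.pi * u) ^ (-(d:ℝ)/2) ≤ (2 * Real.pi * δ ^ 2) ^ (-(d:ℝ)/2) := by
      apply Real.rpow_le_rpow_of_nonpos (by positivity)
      · nlinarith [Real.pi_pos]
      · have : (0:ℝ) ≤ (d:ℝ) := Nat.cast_nonneg d
        linarith
    have hb0 : (0:ℝ) ≤ (2 * Real.pi * u) ^ (-(d:ℝ)/2) := Real.rpow_nonneg (by positivity) _
    calc ‖z‖ ^ 2 * ((2 * Real.pi * u) ^ (-(d:ℝ) / 2) * Real.exp (-‖z‖ ^ 2 / (2 * u)))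
        ≤ δ ^ 2 * ((2 * Real.pi * u) ^ (-(d:ℝ) / 2) * 1) := by
          apply mul_le_mul h1 _ (by positivity) (by positivity)
          exact mul_le_mul_of_nonneg_left h2 hb0
      _ ≤ δ ^ 2 * (2 * Real.pi * δ ^ 2) ^ (-(d:ℝ)/2) := by
          rw [mul_one]
          exact mul_le_mul_of_nonneg_left h3 (by positivity)
  have hSm : MeasurableSet {z : E | ‖z‖ ≤ δ} := by
    rw [hS]; exact measurableSet_closedBall
  calc (∫⁻ z in {z : E | ‖z‖ ≤ δ},
        ENNReal.ofReal (‖z‖ ^ 2 * ((2 * Real.pi * u) ^ (-(d:ℝ) / 2)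
          * Real.exp (-‖z‖ ^ 2 / (2 * u)))))
      ≤ ∫⁻ _ in {z : E | ‖z‖ ≤ δ},
          ENNReal.ofReal (δ ^ 2 * (2 * Real.pi * δ ^ 2) ^ (-(d:ℝ)/2)) :=
        setLIntegral_mono' hSm hptwise
    _ = ENNReal.ofReal (δ ^ 2 * (2 * Real.pi * δ ^ 2) ^ (-(d:ℝ)/2))
          * volume {z : E | ‖z‖ ≤ δ} := setLIntegral_const _ _
    _ = ENNReal.ofReal (δ ^ 2 * (2 * Real.pi * δ ^ 2) ^ (-(d:ℝ)/2))
          * (ENNReal.ofReal (δ ^ Module.finrank ℝ E) * volume (Metric.ball (0 : E) 1)) := by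
        rw [hS, Measure.addHaar_closedBall _ _ hδ0.le]
    _ = ENNReal.ofReal (δ ^ 2 * (2 * Real.pi) ^ (-(d:ℝ)/2))
          * volume (Metric.ball (0 : E) 1) := by
        rw [← mul_assoc, ← ENNReal.ofReal_mul (by positivity)]
        congr 2
        have hfr : Module.finrank ℝ E = d := @finrank_euclideanSpace_fin ℝ _ d
        rw [hfr]
        have e1 : (2 * Real.pi * δ ^ 2 : ℝ) ^ (-(d:ℝ)/2)
            = (2 * Real.pi) ^ (-(d:ℝ)/2) * ((δ ^ 2 : ℝ)) ^ (-(d:ℝ)/2) :=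
          Real.mul_rpow (by positivity) (by positivity)
        have e2 : ((δ ^ 2 : ℝ)) ^ (-(d:ℝ)/2) * δ ^ d = 1 := by
          rw [← Real.rpow_natCast δ d, ← Real.rpow_natCast δ 2,
            ← Real.rpow_mul hδ0.le, ← Real.rpow_add hδ0]
          rw [show ((2:ℕ):ℝ) * (-(d:ℝ)/2) + (d:ℕ) = 0 by push_cast; ring, Real.rpow_zero]
        calc δ ^ 2 * (2 * Real.pi * δ ^ 2) ^ (-(d:ℝ)/2) * δ ^ d
            = δ ^ 2 * (2 * Real.pi) ^ (-(d:ℝ)/2) * (((δ ^ 2 : ℝ)) ^ (-(d:ℝ)/2) * δ ^ d) := by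
              rw [e1]; ring
          _ = δ ^ 2 * (2 * Real.pi) ^ (-(d:ℝ)/2) := by rw [e2, mul_one]

theorem subordinated_levy_measure_small_jump_bound
    (d : ℕ) (hd : 1 ≤ d) (α : ℝ) (hα : α ∈ Set.Ioo (0:ℝ) 2)
    (νS : Measure ℝ) (C : ℝ) (hC : 1 ≤ C)
    (hmom : ∀ ε ∈ Set.Ioc (0:ℝ) 1,
      ∫⁻ u in Set.Ioc (0:ℝ) ε, ENNReal.ofReal u ∂νS
        ≤ ENNReal.ofReal (C * ε ^ (1 - α / 2)))
    (htail : ∀ ε ∈ Set.Ioc (0:ℝ) 1,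
      νS (Set.Ici ε) ≤ ENNReal.ofReal (C * ε ^ (-(α / 2)))) :
    ∃ C₁ : ℝ, 1 ≤ C₁ ∧ ∀ δ ∈ Set.Ioo (0:ℝ) 1,
      (∫⁻ u in Set.Ioi (0:ℝ),
        (∫⁻ z in {z : EuclideanSpace ℝ (Fin d) | ‖z‖ ≤ δ},
          ENNReal.ofReal (‖z‖ ^ 2 * ((2 * Real.pi * u) ^ (-(d:ℝ) / 2)
            * Real.exp (-‖z‖ ^ 2 / (2 * u))))) ∂νS)
        ≤ ENNReal.ofReal (C₁ * δ ^ (2 - α)) := by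
  set E := EuclideanSpace ℝ (Fin d)
  set I : ℝ≥0∞ := ∫⁻ x : E, ENNReal.ofReal (‖x‖ ^ 2 * Real.exp (-‖x‖ ^ 2)) with hI_def
  have hI : I ≠ ⊤ := (gauss_moment_integrable d).lintegral_lt_top.ne
  set K : ℝ≥0∞ := volume (Metric.ball (0 : E) 1) with hK_def
  have hK : K ≠ ⊤ := measure_ball_lt_top.ne
  set kI : ℝ := 2 * Real.pi ^ (-(d:ℝ)/2) * I.toReal with hkI_def
  set kK : ℝ := (2 * Real.pi) ^ (-(d:ℝ)/2) * K.toReal with hkK_def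
  have hkI0 : 0 ≤ kI := by positivity
  have hkK0 : 0 ≤ kK := by positivity
  have hC0 : (0:ℝ) ≤ C := by linarith
  refine ⟨C * (kI + kK) + 1, by nlinarith, ?_⟩
  intro δ hδ
  obtain ⟨hδ0, hδ1⟩ := hδ
  have hδ2 : δ ^ 2 ∈ Set.Ioc (0:ℝ) 1 := ⟨by positivity, by nlinarith⟩
  set F : ℝ → ℝ≥0∞ := fun u => ∫⁻ z in {z : E | ‖z‖ ≤ δ},
    ENNReal.ofReal (‖z‖ ^ 2 * ((2 * Real.pi * u) ^ (-(d:ℝ) / 2)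
      * Real.exp (-‖z‖ ^ 2 / (2 * u)))) with hF_def
  have hsplit : Set.Ioi (0:ℝ) = Set.Ioc 0 (δ ^ 2) ∪ Set.Ioi (δ ^ 2) :=
    (Set.Ioc_union_Ioi_eq_Ioi hδ2.1.le).symm
  have hpow1 : ((δ ^ 2 : ℝ)) ^ (1 - α/2) = δ ^ (2 - α) := by
    rw [← Real.rpow_natCast δ 2, ← Real.rpow_mul hδ0.le]
    congr 1; push_cast; ring
  have hpow2 : ((δ ^ 2 : ℝ)) ^ (-(α/2)) = δ ^ (-α) := by
    rw [← Real.rpow_natCast δ 2, ← Real.rpow_mul hδ0.le]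
    congr 1; push_cast; ring
  have hpow3 : δ ^ (2 - α) = δ ^ 2 * δ ^ (-α) := by
    rw [show (2 - α : ℝ) = ((2:ℕ):ℝ) + (-α) by push_cast; ring, Real.rpow_add hδ0,
      Real.rpow_natCast]
  have h1 : (∫⁻ u in Set.Ioc (0:ℝ) (δ ^ 2), F u ∂νS)
      ≤ ENNReal.ofReal kI * ENNReal.ofReal (C * δ ^ (2 - α)) := by
    have hb : ∀ u ∈ Set.Ioc (0:ℝ) (δ ^ 2),
        F u ≤ (ENNReal.ofReal (2 * Real.pi ^ (-(d:ℝ)/2)) * I) * ENNReal.ofReal u :=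
      fun u hu => inner_le_small d u hu.1 δ
    calc (∫⁻ u in Set.Ioc (0:ℝ) (δ ^ 2), F u ∂νS)
        ≤ ∫⁻ u in Set.Ioc (0:ℝ) (δ ^ 2),
            (ENNReal.ofReal (2 * Real.pi ^ (-(d:ℝ)/2)) * I) * ENNReal.ofReal u ∂νS :=
          setLIntegral_mono' measurableSet_Ioc hb
      _ = (ENNReal.ofReal (2 * Real.pi ^ (-(d:ℝ)/2)) * I)
            * ∫⁻ u in Set.Ioc (0:ℝ) (δ ^ 2), ENNReal.ofReal u ∂νS :=
          lintegral_const_mul' _ _ (ENNReal.mul_ne_top ENNReal.ofReal_ne_top hI)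
      _ ≤ (ENNReal.ofReal (2 * Real.pi ^ (-(d:ℝ)/2)) * I)
            * ENNReal.ofReal (C * (δ ^ 2) ^ (1 - α/2)) :=
          mul_le_mul_right (hmom _ hδ2) _
      _ = ENNReal.ofReal kI * ENNReal.ofReal (C * δ ^ (2 - α)) := by
          rw [hpow1]
          have hkIeq : ENNReal.ofReal kI = ENNReal.ofReal (2 * Real.pi ^ (-(d:ℝ)/2)) * I := by
            rw [hkI_def, ENNReal.ofReal_mul (by positivity), ENNReal.ofReal_toReal hI]
          rw [hkIeq]
  have h2 : (∫⁻ u in Set.Ioi (δ ^ 2), F u ∂νS)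
      ≤ ENNReal.ofReal (δ ^ 2 * (2 * Real.pi) ^ (-(d:ℝ)/2)) * ENNReal.ofReal K.toReal
          * ENNReal.ofReal (C * (δ ^ 2) ^ (-(α/2))) := by
    have hb : ∀ u ∈ Set.Ioi (δ ^ 2),
        F u ≤ ENNReal.ofReal (δ ^ 2 * (2 * Real.pi) ^ (-(d:ℝ)/2)) * K :=
      fun u hu => inner_le_large d δ hδ0 u (le_of_lt hu)
    calc (∫⁻ u in Set.Ioi (δ ^ 2), F u ∂νS)
        ≤ ∫⁻ _ in Set.Ioi (δ ^ 2),
            ENNReal.ofReal (δ ^ 2 * (2 * Real.pi) ^ (-(d:ℝ)/2)) * K ∂νS :=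
          setLIntegral_mono' measurableSet_Ioi hb
      _ = ENNReal.ofReal (δ ^ 2 * (2 * Real.pi) ^ (-(d:ℝ)/2)) * K * νS (Set.Ioi (δ ^ 2)) :=
          setLIntegral_const _ _
      _ ≤ ENNReal.ofReal (δ ^ 2 * (2 * Real.pi) ^ (-(d:ℝ)/2)) * K * νS (Set.Ici (δ ^ 2)) :=
          mul_le_mul_right (measure_mono Set.Ioi_subset_Ici_self) _
      _ ≤ ENNReal.ofReal (δ ^ 2 * (2 * Real.pi) ^ (-(d:ℝ)/2)) * K
            * ENNReal.ofReal (C * (δ ^ 2) ^ (-(α/2))) :=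
          mul_le_mul_right (htail _ hδ2) _
      _ = ENNReal.ofReal (δ ^ 2 * (2 * Real.pi) ^ (-(d:ℝ)/2)) * ENNReal.ofReal K.toReal
            * ENNReal.ofReal (C * (δ ^ 2) ^ (-(α/2))) := by
          rw [ENNReal.ofReal_toReal hK]
  have hfinal : kI * (C * δ ^ (2 - α))
      + δ ^ 2 * (2 * Real.pi) ^ (-(d:ℝ)/2) * K.toReal * (C * (δ ^ 2) ^ (-(α/2)))
      ≤ (C * (kI + kK) + 1) * δ ^ (2 - α) := by
    rw [hpow2]
    have hX : (0:ℝ) ≤ δ ^ (2 - α) := Real.rpow_nonneg hδ0.le _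
    have heq : δ ^ 2 * (2 * Real.pi) ^ (-(d:ℝ)/2) * K.toReal * (C * δ ^ (-α))
        = C * kK * δ ^ (2 - α) := by
      rw [hpow3, hkK_def]; ring
    rw [heq]
    nlinarith
  calc (∫⁻ u in Set.Ioi (0:ℝ), F u ∂νS)
      = (∫⁻ u in Set.Ioc (0:ℝ) (δ ^ 2), F u ∂νS) + ∫⁻ u in Set.Ioi (δ ^ 2), F u ∂νS := by
        rw [hsplit, lintegral_union measurableSet_Ioi Set.Ioc_disjoint_Ioi_same]
    _ ≤ ENNReal.ofReal kI * ENNReal.ofReal (C * δ ^ (2 - α))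
        + ENNReal.ofReal (δ ^ 2 * (2 * Real.pi) ^ (-(d:ℝ)/2)) * ENNReal.ofReal K.toReal
            * ENNReal.ofReal (C * (δ ^ 2) ^ (-(α/2))) := add_le_add h1 h2
    _ = ENNReal.ofReal (kI * (C * δ ^ (2 - α))
          + δ ^ 2 * (2 * Real.pi) ^ (-(d:ℝ)/2) * K.toReal * (C * (δ ^ 2) ^ (-(α/2)))) := by
        rw [← ENNReal.ofReal_mul hkI0, ← ENNReal.ofReal_mul (by positivity),
          ← ENNReal.ofReal_mul (by positivity),
          ← ENNReal.ofReal_add (by positivity) (by positivity)]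
    _ ≤ ENNReal.ofReal ((C * (kI + kK) + 1) * δ ^ (2 - α)) := ENNReal.ofReal_le_ofReal hfinal
end
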